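/- The two-particle contribution to the constant C of the scaling Ising model is given by: integral over theta in (-infinity, infinity) of (tanh^2(theta/2) - 1) * ( ln(cosh(theta/2)) + gamma ) d theta = 4*(ln(2) - gamma - 1), where gamma is the Euler-Mascheroni constant. -/

import Mathlib

open Real Filter MeasureTheory Topology Set

local notation "γ'" => Real.eulerMascheroniConstant

noncomputable def Hising (u : ℝ) : ℝ :=
  Real.tanh u * (Real.log (Real.cosh u) + γ') + Real.tanh u - u

noncomputable def G (θ : ℝ) : ℝ := -2 * Hising (θ/2)

lemma tanh_sq_sub_one (u : ℝ) : Real.tanh u ^ 2 - 1 = -(1 / Real.cosh u ^ 2) := by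
  have h := Real.cosh_sq_sub_sinh_sq u
  have hc := (Real.cosh_pos u).ne'
  rw [Real.tanh_eq_sinh_div_cosh]
  field_simp
  nlinarith [h]

lemma G_hasDeriv (θ : ℝ) : HasDerivAt G
    ((Real.tanh (θ/2) ^ 2 - 1) * (Real.log (Real.cosh (θ/2)) + γ')) θ := by
  have h2 : HasDerivAt (fun θ : ℝ => θ/2) (1/2) θ := (hasDerivAt_id θ).div_const 2
  have hc : HasDerivAt (fun θ : ℝ => Real.cosh (θ/2)) (Real.sinh (θ/2) * (1/2)) θ :=
    by have := (Real.hasDerivAt_cosh (θ/2)).comp θ h2; exact this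
  have hcp := Real.cosh_pos (θ/2)
  have ht : HasDerivAt (fun θ : ℝ => Real.tanh (θ/2))
      (1 / Real.cosh (θ/2) ^ 2 * (1/2)) θ := by
    have hs : HasDerivAt (fun θ : ℝ => Real.sinh (θ/2)) (Real.cosh (θ/2) * (1/2)) θ :=
      by have := (Real.hasDerivAt_sinh (θ/2)).comp θ h2; exact this
    have := hs.div hc hcp.ne'
    have heq : (fun θ : ℝ => Real.sinh (θ/2) / Real.cosh (θ/2))
        = fun θ : ℝ => Real.tanh (θ/2) := by
      funext x; rw [Real.tanh_eq_sinh_div_cosh]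
    simp only [Pi.div_def] at this
    rw [heq] at this
    refine this.congr_deriv ?_
    have h1 := Real.cosh_sq_sub_sinh_sq (θ/2)
    set c := Real.cosh (θ/2)
    set s := Real.sinh (θ/2)
    field_simp
    linear_combination h1
  have hl : HasDerivAt (fun θ : ℝ => Real.log (Real.cosh (θ/2)))
      (Real.sinh (θ/2) * (1/2) / Real.cosh (θ/2)) θ := hc.log hcp.ne'
  have hG : HasDerivAt G
      (-2 * ((1 / Real.cosh (θ/2) ^ 2 * (1/2)) * (Real.log (Real.cosh (θ/2)) + γ')
        + Real.tanh (θ/2) * (Real.sinh (θ/2) * (1/2) / Real.cosh (θ/2))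
        + 1 / Real.cosh (θ/2) ^ 2 * (1/2) - 1/2)) θ := by
    exact (((ht.mul (hl.add_const γ')).add ht).sub h2).const_mul (-2)
  convert hG using 1
  rw [Real.tanh_eq_sinh_div_cosh]
  have h1 := Real.cosh_sq_sub_sinh_sq (θ/2)
  have hcp := Real.cosh_pos (θ/2)
  set c := Real.cosh (θ/2)
  set s := Real.sinh (θ/2)
  set L := Real.log c
  field_simp
  linear_combination (-(L + γ' + 1)) * h1

lemma gamma_lt_one : γ' < 1 :=
  Real.eulerMascheroniConstant_lt_two_thirds.trans (by norm_num)

lemma gamma_pos : 0 < γ' :=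
  lt_trans (by norm_num) Real.one_half_lt_eulerMascheroniConstant

lemma integrable_majorant : Integrable (fun θ : ℝ => 4 * Real.exp (-(2⁻¹ * |θ|))) := by
  have hf : IntegrableOn (fun θ : ℝ => 4 * Real.exp (-(2⁻¹ * |θ|))) (Ioi 0) := by
    have base : IntegrableOn (fun x : ℝ => 4 * Real.exp (-2⁻¹ * x)) (Ioi 0) :=
      (exp_neg_integrableOn_Ioi 0 (by norm_num : (0:ℝ) < 2⁻¹)).const_mul 4
    refine base.congr_fun (fun x hx => ?_) measurableSet_Ioi
    beta_reduce
    rw [abs_of_pos hx, neg_mul]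
  have int_Iic : IntegrableOn (fun θ : ℝ => 4 * Real.exp (-(2⁻¹ * |θ|))) (Iic 0) := by
    rw [← Measure.map_neg_eq_self (volume : Measure ℝ)]
    have m : MeasurableEmbedding fun x : ℝ => -x := (Homeomorph.neg ℝ).measurableEmbedding
    rw [m.integrableOn_map_iff]
    simp_rw [Function.comp_def, abs_neg, neg_preimage, neg_Iic, neg_zero]
    exact Iff.mpr integrableOn_Ici_iff_integrableOn_Ioi hf
  rw [← integrableOn_univ, ← Iic_union_Ioi (a := (0:ℝ))]
  exact int_Iic.union hf

lemma g_bound (θ : ℝ) :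
    ‖(Real.tanh (θ/2) ^ 2 - 1) * (Real.log (Real.cosh (θ/2)) + γ')‖
      ≤ 4 * Real.exp (-(2⁻¹ * |θ|)) := by
  set u := θ/2 with hu
  have hcp := Real.cosh_pos u
  have hc1 := Real.one_le_cosh u
  have hln : 0 ≤ Real.log (Real.cosh u) := Real.log_nonneg hc1
  have habs : |u| = |θ|/2 := by rw [hu, abs_div]; norm_num
  -- cosh u ≤ exp |u| and exp |u| ≤ 2 cosh u
  have h1 : Real.cosh u ≤ Real.exp |u| := by
    rw [Real.cosh_eq]
    have := Real.exp_le_exp.2 (le_abs_self u)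
    have := Real.exp_le_exp.2 (neg_le_abs u)
    linarith
  have h2 : Real.exp |u| ≤ 2 * Real.cosh u := by
    rw [Real.cosh_eq]
    rcases abs_cases u with ⟨h, _⟩ | ⟨h, _⟩ <;> rw [h] <;>
      [linarith [(Real.exp_pos (-u)).le]; linarith [(Real.exp_pos u).le]]
  -- rewrite norm
  rw [show (Real.tanh u ^ 2 - 1) * (Real.log (Real.cosh u) + γ')
      = -((1 / Real.cosh u ^ 2) * (Real.log (Real.cosh u) + γ')) by
    rw [tanh_sq_sub_one]; ring]
  have hnn : (0:ℝ) ≤ 1 / Real.cosh u ^ 2 * (Real.log (Real.cosh u) + γ') :=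
    mul_nonneg (by positivity) (by linarith [gamma_pos])
  rw [norm_neg, Real.norm_eq_abs, abs_of_nonneg hnn]
  -- bound the two factors
  have hA : 1 / Real.cosh u ^ 2 ≤ 4 * Real.exp (-(2 * |u|)) := by
    rw [div_le_iff₀ (by positivity)]
    have : Real.exp |u| ^ 2 ≤ (2 * Real.cosh u) ^ 2 := by
      apply pow_le_pow_left₀ (Real.exp_pos _).le h2
    rw [← Real.exp_nat_mul] at this
    calc (1:ℝ) = Real.exp (-(2 * |u|)) * Real.exp (2 * |u|) := by
          rw [← Real.exp_add]; simp
      _ ≤ 4 * Real.exp (-(2 * |u|)) * Real.cosh u ^ 2 := by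
          have h3 : Real.exp (2 * |u|) ≤ 4 * Real.cosh u ^ 2 := by
            calc Real.exp (2 * |u|) = Real.exp ((2:ℕ) * |u|) := by norm_num
              _ ≤ (2 * Real.cosh u) ^ 2 := this
              _ = 4 * Real.cosh u ^ 2 := by ring
          calc Real.exp (-(2 * |u|)) * Real.exp (2 * |u|)
              ≤ Real.exp (-(2 * |u|)) * (4 * Real.cosh u ^ 2) := by
                exact mul_le_mul_of_nonneg_left h3 (Real.exp_pos _).le
            _ = 4 * Real.exp (-(2 * |u|)) * Real.cosh u ^ 2 := by ring
  have hB : Real.log (Real.cosh u) + γ' ≤ |u| + 1 := by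
    have : Real.log (Real.cosh u) ≤ |u| := by
      rw [← Real.log_exp |u|]
      exact Real.log_le_log hcp h1
    linarith [gamma_lt_one]
  calc 1 / Real.cosh u ^ 2 * (Real.log (Real.cosh u) + γ')
      ≤ (4 * Real.exp (-(2 * |u|))) * (|u| + 1) := by
        apply mul_le_mul hA hB (by linarith [gamma_pos]) (by positivity)
    _ ≤ (4 * Real.exp (-(2 * |u|))) * Real.exp |u| := by
        apply mul_le_mul_of_nonneg_left _ (by positivity)
        have := Real.add_one_le_exp |u|
        linarith
    _ = 4 * Real.exp (-(2⁻¹ * |θ|)) := by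
        rw [mul_assoc, ← Real.exp_add, habs]
        ring_nf

lemma integrable_g : Integrable (fun θ : ℝ =>
    (Real.tanh (θ/2) ^ 2 - 1) * (Real.log (Real.cosh (θ/2)) + γ')) := by
  have hcont : Continuous (fun θ : ℝ =>
      (Real.tanh (θ/2) ^ 2 - 1) * (Real.log (Real.cosh (θ/2)) + γ')) := by
    have hc2 : Continuous (fun θ : ℝ => θ/2) := continuous_id.div_const 2
    have hch : Continuous (fun θ : ℝ => Real.cosh (θ/2)) := Real.continuous_cosh.comp hc2
    have hth : Continuous (fun θ : ℝ => Real.tanh (θ/2)) := by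
      have : Continuous (fun θ : ℝ => Real.sinh (θ/2) / Real.cosh (θ/2)) :=
        (Real.continuous_sinh.comp hc2).div (Real.continuous_cosh.comp hc2)
          (fun x => (Real.cosh_pos _).ne')
      simpa only [← Real.tanh_eq_sinh_div_cosh] using this
    have hlg : Continuous (fun θ : ℝ => Real.log (Real.cosh (θ/2))) :=
      hch.log (fun x => (Real.cosh_pos _).ne')
    exact ((hth.pow 2).sub continuous_const).mul (hlg.add continuous_const)
  exact integrable_majorant.mono' hcont.aestronglyMeasurable
    (ae_of_all _ g_bound)

lemma exp_neg_two_tendsto : Tendsto (fun u : ℝ => Real.exp (-(2*u))) atTop (𝓝 0) :=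
  Real.tendsto_exp_neg_atTop_nhds_zero.comp (tendsto_id.const_mul_atTop two_pos)

lemma tanh_eq_exp (u : ℝ) :
    Real.tanh u = (1 - Real.exp (-(2*u))) / (1 + Real.exp (-(2*u))) := by
  rw [Real.tanh_eq_sinh_div_cosh, Real.sinh_eq, Real.cosh_eq]
  have h1 : Real.exp u ≠ 0 := (Real.exp_pos u).ne'
  have h2 : (0:ℝ) < 1 + Real.exp (-(2*u)) := by positivity
  have h3 : (0:ℝ) < Real.exp u + Real.exp (-u) := by positivity
  have e1 : Real.exp (-u) = Real.exp (-(2*u)) * Real.exp u := by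
    rw [← Real.exp_add]; ring_nf
  rw [e1]
  field_simp

lemma tendsto_tanh_atTop : Tendsto Real.tanh atTop (𝓝 1) := by
  have : Tendsto (fun u : ℝ => (1 - Real.exp (-(2*u))) / (1 + Real.exp (-(2*u))))
      atTop (𝓝 ((1 - 0) / (1 + 0))) :=
    (tendsto_const_nhds.sub exp_neg_two_tendsto).div
      (tendsto_const_nhds.add exp_neg_two_tendsto) (by norm_num)
  simp only [sub_zero, add_zero, div_one] at this
  exact this.congr (fun u => (tanh_eq_exp u).symm)

lemma tendsto_logcosh : Tendsto (fun u : ℝ => Real.log (Real.cosh u) - u) atTop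
    (𝓝 (-Real.log 2)) := by
  have key : ∀ u : ℝ, Real.log (Real.cosh u) - u
      = Real.log ((1 + Real.exp (-(2*u))) / 2) := by
    intro u
    have h2 : (0:ℝ) < 1 + Real.exp (-(2*u)) := by positivity
    have e1 : Real.cosh u = Real.exp u * ((1 + Real.exp (-(2*u))) / 2) := by
      rw [Real.cosh_eq]
      have : Real.exp (-u) = Real.exp (-(2*u)) * Real.exp u := by
        rw [← Real.exp_add]; ring_nf
      rw [this]; ring
    rw [e1, Real.log_mul (Real.exp_pos u).ne' (by positivity), Real.log_exp]
    ring
  have hlim : Tendsto (fun u : ℝ => (1 + Real.exp (-(2*u))) / 2) atTop (𝓝 ((1+0)/2)) :=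
    (tendsto_const_nhds.add exp_neg_two_tendsto).div_const 2
  rw [show ((1:ℝ)+0)/2 = 2⁻¹ by norm_num] at hlim
  have hcomp := (Real.continuousAt_log (by norm_num : (2⁻¹:ℝ) ≠ 0)).tendsto.comp hlim
  simp only [Function.comp_def] at hcomp
  rw [Real.log_inv] at hcomp
  exact (tendsto_congr key).2 hcomp

lemma tendsto_tanh_sub_one_mul : Tendsto (fun u : ℝ => (Real.tanh u - 1) * u) atTop (𝓝 0) := by
  have key : ∀ u : ℝ, (Real.tanh u - 1) * u
      = -(2 * (u * Real.exp (-(2*u)))) / (1 + Real.exp (-(2*u))) := by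
    intro u
    have h2 : (0:ℝ) < 1 + Real.exp (-(2*u)) := by positivity
    rw [tanh_eq_exp]
    field_simp
    ring
  have hue : Tendsto (fun u : ℝ => u * Real.exp (-(2*u))) atTop (𝓝 0) := by
    have h1 : Tendsto (fun u : ℝ => (2*u) ^ 1 * Real.exp (-(2*u))) atTop (𝓝 0) :=
      (tendsto_pow_mul_exp_neg_atTop_nhds_zero 1).comp (tendsto_id.const_mul_atTop two_pos)
    have := h1.const_mul (1/2 : ℝ)
    simp only [mul_zero] at this
    exact this.congr (fun u => by ring_nf)
  have : Tendsto (fun u : ℝ => -(2 * (u * Real.exp (-(2*u)))) / (1 + Real.exp (-(2*u))))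
      atTop (𝓝 (-(2 * 0) / (1 + 0))) :=
    ((hue.const_mul 2).neg).div (tendsto_const_nhds.add exp_neg_two_tendsto) (by norm_num)
  simp only [mul_zero, neg_zero, add_zero, zero_div] at this
  exact (tendsto_congr key).2 this

lemma tendsto_H : Tendsto Hising atTop (𝓝 (γ' + 1 - Real.log 2)) := by
  have key : ∀ u : ℝ, Hising u = Real.tanh u * (Real.log (Real.cosh u) - u)
      + (Real.tanh u - 1) * u + (γ' * Real.tanh u + Real.tanh u) := by
    intro u; unfold Hising; ring
  have h : Tendsto (fun u : ℝ => Real.tanh u * (Real.log (Real.cosh u) - u)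
      + (Real.tanh u - 1) * u + (γ' * Real.tanh u + Real.tanh u)) atTop
      (𝓝 (1 * (-Real.log 2) + 0 + (γ' * 1 + 1))) :=
    ((tendsto_tanh_atTop.mul tendsto_logcosh).add tendsto_tanh_sub_one_mul).add
      ((tendsto_tanh_atTop.const_mul γ').add tendsto_tanh_atTop)
  rw [show (1 : ℝ) * (-Real.log 2) + 0 + (γ' * 1 + 1) = γ' + 1 - Real.log 2 by ring] at h
  exact (tendsto_congr key).2 h

lemma tendsto_G_atTop : Tendsto G atTop (𝓝 (2 * Real.log 2 - 2 * γ' - 2)) := by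
  have hdiv : Tendsto (fun θ : ℝ => θ/2) atTop atTop := tendsto_id.atTop_div_const two_pos
  have := (tendsto_H.comp hdiv).const_mul (-2 : ℝ)
  rw [show (-2 : ℝ) * (γ' + 1 - Real.log 2) = 2 * Real.log 2 - 2 * γ' - 2 by ring] at this
  exact this

lemma G_odd (θ : ℝ) : G (-θ) = -G θ := by
  unfold G Hising
  rw [neg_div, Real.tanh_neg, Real.cosh_neg]
  ring

lemma tendsto_G_atBot : Tendsto G atBot (𝓝 (-(2 * Real.log 2 - 2 * γ' - 2))) := by
  have h1 : Tendsto (fun θ : ℝ => G (-θ)) atBot (𝓝 (2 * Real.log 2 - 2 * γ' - 2)) :=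
    tendsto_G_atTop.comp tendsto_neg_atBot_atTop
  have h2 : Tendsto (fun θ : ℝ => -G θ) atBot (𝓝 (2 * Real.log 2 - 2 * γ' - 2)) :=
    h1.congr (fun θ => G_odd θ)
  simpa using h2.neg

/-- The two-particle contribution to the constant `C` of the scaling Ising model:
`∫_{-∞}^{∞} (tanh²(θ/2) - 1)(ln cosh(θ/2) + γ) dθ = 4 (ln 2 - γ - 1)`,
where `γ` is the Euler-Mascheroni constant. -/
theorem ising_C_two_particle :
    ∫ θ : ℝ, (Real.tanh (θ / 2) ^ 2 - 1) *
        (Real.log (Real.cosh (θ / 2)) + Real.eulerMascheroniConstant)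
      = 4 * (Real.log 2 - Real.eulerMascheroniConstant - 1) := by
  have := MeasureTheory.integral_of_hasDerivAt_of_tendsto G_hasDeriv integrable_g
    tendsto_G_atBot tendsto_G_atTop
  rw [this]
  ring
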